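/- (Characterization of Levenshtein-distance-1 operations.) Let S be a nonempty list over Γ and let S' be a list over Γ with d_lev(S, S') = 1. Then there exist an index i < 2·|S| + 1 and an element c : Option Γ such that S' = ψ((φ(S)).set i c). -/

import Mathlib

/-! Mathlib's `Data/List/EditDistance/Defs.lean` (removed since) restated verbatim. -/

/-- A cost function for Levenshtein distance (as in the old Mathlib). -/
structure Levenshtein.Cost (α β δ : Type*) where
  delete : α → δ
  insert : β → δ
  substitute : α → β → δ

/-- The default unit cost (as in the old Mathlib). -/
def Levenshtein.defaultCost {α : Type*} [DecidableEq α] : Levenshtein.Cost α α ℕ where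
  delete _ := 1
  insert _ := 1
  substitute a b := if a = b then 0 else 1

/-- Inner loop of `suffixLevenshtein` (as in the old Mathlib). -/
def Levenshtein.impl {α β δ : Type*} [AddZeroClass δ] [Min δ]
    (C : Levenshtein.Cost α β δ) (xs : List α) (y : β) (d : {r : List δ // 0 < r.length}) :
    {r : List δ // 0 < r.length} :=
  let ⟨ds, w⟩ := d
  xs.zip (ds.zip ds.tail) |>.foldr
    (init := ⟨[C.insert y + ds.getLast (List.length_pos_iff.mp w)], by simp⟩)
    (fun ⟨x, d₀, d₁⟩ ⟨r, w⟩ =>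
      ⟨min (C.delete x + r[0]) (min (C.insert y + d₀) (C.substitute x y + d₁)) :: r, by simp⟩)

/-- Levenshtein distances of all suffixes (as in the old Mathlib). -/
def suffixLevenshtein {α β δ : Type*} [AddZeroClass δ] [Min δ]
    (C : Levenshtein.Cost α β δ) (xs : List α) (ys : List β) :
    {r : List δ // 0 < r.length} :=
  ys.foldr
    (Levenshtein.impl C xs)
    (xs.foldr (init := ⟨[0], by simp⟩) (fun a ⟨r, w⟩ => ⟨(C.delete a + r[0]) :: r, by simp⟩))

/-- The Levenshtein distance (as in the old Mathlib). -/
def levenshtein {α β δ : Type*} [AddZeroClass δ] [Min δ]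
    (C : Levenshtein.Cost α β δ) (xs : List α) (ys : List β) : δ :=
  let ⟨r, w⟩ := suffixLevenshtein C xs ys
  r[0]

/-- The expansion map: insert the special symbol `ξ` (encoded as `none`)
before and after every character of `S`. -/
def phi {Γ : Type*} (S : List Γ) : List (Option Γ) :=
  none :: S.flatMap (fun c => [some c, none])

/-- The contraction map: remove all occurrences of `ξ` (encoded as `none`). -/
def psi {Γ : Type*} (T : List (Option Γ)) : List Γ :=
  T.filterMap id

/-- The Levenshtein (edit) distance with unit costs. -/
def dlev {Γ : Type*} [DecidableEq Γ] (S S' : List Γ) : ℕ :=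
  levenshtein Levenshtein.defaultCost S S'

namespace Levenshtein

@[simp] theorem defaultCost_delete {α : Type*} [DecidableEq α] (a : α) :
    (defaultCost : Cost α α ℕ).delete a = 1 := rfl

@[simp] theorem defaultCost_insert {α : Type*} [DecidableEq α] (a : α) :
    (defaultCost : Cost α α ℕ).insert a = 1 := rfl

@[simp] theorem defaultCost_substitute {α : Type*} [DecidableEq α] (a b : α) :
    (defaultCost : Cost α α ℕ).substitute a b = if a = b then 0 else 1 := rfl

theorem impl_cons {α β δ : Type*} [AddZeroClass δ] [Min δ] (C : Cost α β δ)
    (x : α) (xs : List α) (y : β) (d : δ) (ds : List δ) (w) (w' : 0 < List.length ds) :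
    impl C (x :: xs) y ⟨d :: ds, w⟩ =
      let ⟨r, w⟩ := impl C xs y ⟨ds, w'⟩
      ⟨min (C.delete x + r[0]) (min (C.insert y + d) (C.substitute x y + ds[0])) :: r, by simp⟩ :=
  match ds, w' with | _ :: _, _ => rfl

theorem impl_cons_fst_zero {α β δ : Type*} [AddZeroClass δ] [Min δ] (C : Cost α β δ)
    (x : α) (xs : List α) (y : β) (d : δ) (ds : List δ) (w) (h) (w' : 0 < List.length ds) :
    (impl C (x :: xs) y ⟨d :: ds, w⟩).1[0]'h =
      let ⟨r, w⟩ := impl C xs y ⟨ds, w'⟩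
      min (C.delete x + r[0]) (min (C.insert y + d) (C.substitute x y + ds[0])) :=
  match ds, w' with | _ :: _, _ => rfl

theorem impl_length {α β δ : Type*} [AddZeroClass δ] [Min δ] (C : Cost α β δ)
    (xs : List α) (y : β) (d : {r : List δ // 0 < r.length})
    (w : d.1.length = xs.length + 1) :
    (impl C xs y d).1.length = xs.length + 1 := by
  induction xs generalizing d with
  | nil => rfl
  | cons x xs ih =>
    dsimp [impl]
    match d, w with
    | ⟨d₁ :: d₂ :: ds, _⟩, w =>
      dsimp
      congr 1
      exact ih ⟨d₂ :: ds, (by simp)⟩ (by simpa using w)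

end Levenshtein

open Levenshtein in
theorem suffixLevenshtein_length {α β δ : Type*} [AddZeroClass δ] [Min δ] (C : Cost α β δ)
    (xs : List α) (ys : List β) :
    (suffixLevenshtein C xs ys).1.length = xs.length + 1 := by
  induction ys with
  | nil =>
    dsimp [suffixLevenshtein]
    induction xs with
    | nil => rfl
    | cons _ xs ih =>
      simp_all
  | cons y ys ih =>
    dsimp [suffixLevenshtein]
    rw [impl_length]
    exact ih

open Levenshtein in
@[simp] theorem levenshtein_nil_nil {α β δ : Type*} [AddZeroClass δ] [Min δ] (C : Cost α β δ) :
    levenshtein C ([] : List α) ([] : List β) = 0 := by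
  simp [levenshtein, suffixLevenshtein]

open Levenshtein in
@[simp] theorem levenshtein_nil_cons {α β δ : Type*} [AddZeroClass δ] [Min δ] (C : Cost α β δ)
    (y : β) (ys : List β) :
    levenshtein C ([] : List α) (y :: ys) = C.insert y + levenshtein C [] ys := by
  have := suffixLevenshtein_length C ([] : List α) ys
  show (impl C [] y (suffixLevenshtein C [] ys)).1[0]'_ =
    C.insert y + (suffixLevenshtein C [] ys).1[0]'_
  have key : ∀ (d : {r : List δ // 0 < r.length}), d.1.length = 1 →
      ∀ h, (impl C [] y d).1[0]'h = C.insert y + d.1[0]'d.2 := by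
    rintro ⟨r, w⟩ hl h
    obtain ⟨a, rfl⟩ := List.length_eq_one_iff.mp hl
    rfl
  exact key _ (by simpa using this) _

open Levenshtein in
@[simp] theorem levenshtein_cons_nil {α β δ : Type*} [AddZeroClass δ] [Min δ] (C : Cost α β δ)
    (x : α) (xs : List α) :
    levenshtein C (x :: xs) ([] : List β) = C.delete x + levenshtein C xs [] :=
  rfl

open Levenshtein in
theorem suffixLevenshtein_cons₁_aux {δ : Type*} {x y : {r : List δ // 0 < r.length}}
    (w₀ : x.1[0]'x.2 = y.1[0]'y.2) (w : x.1.tail = y.1.tail) : x = y := by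
  match x, y with
  | ⟨hx :: tx, _⟩, ⟨hy :: ty, _⟩ => simp_all

open Levenshtein in
theorem suffixLevenshtein_cons₁ {α β δ : Type*} [AddZeroClass δ] [Min δ] (C : Cost α β δ)
    (x : α) (xs : List α) (ys : List β) :
    suffixLevenshtein C (x :: xs) ys =
      ⟨levenshtein C (x :: xs) ys ::
        (suffixLevenshtein C xs ys).1, by simp⟩ := by
  induction ys with
  | nil =>
    rfl
  | cons y ys ih =>
    apply suffixLevenshtein_cons₁_aux
    · rfl
    · show (impl C (x :: xs) y (suffixLevenshtein C (x :: xs) ys)).1.tail = _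
      rw [ih, impl_cons (w' := by simp [suffixLevenshtein_length])]
      rfl

open Levenshtein in
theorem levenshtein_cons_cons {α β δ : Type*} [AddZeroClass δ] [Min δ] (C : Cost α β δ)
    (x : α) (xs : List α) (y : β) (ys : List β) :
    levenshtein C (x :: xs) (y :: ys) =
      min (C.delete x + levenshtein C xs (y :: ys))
        (min (C.insert y + levenshtein C (x :: xs) ys)
          (C.substitute x y + levenshtein C xs ys)) := by
  show (impl C (x :: xs) y (suffixLevenshtein C (x :: xs) ys)).1[0]'_ = _
  simp only [suffixLevenshtein_cons₁]
  rw [impl_cons_fst_zero (w' := by simp [suffixLevenshtein_length])]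
  rfl

lemma dlev_nil_left {Γ : Type*} [DecidableEq Γ] (S' : List Γ) :
    dlev ([] : List Γ) S' = S'.length := by
  induction S' with
  | nil => simp [dlev]
  | cons y ys ih => simp [dlev] at ih ⊢; omega

lemma dlev_nil_right {Γ : Type*} [DecidableEq Γ] (S : List Γ) :
    dlev S ([] : List Γ) = S.length := by
  induction S with
  | nil => simp [dlev]
  | cons y ys ih => simp [dlev] at ih ⊢; omega

lemma dlev_zero {Γ : Type*} [DecidableEq Γ] :
    ∀ S S' : List Γ, dlev S S' = 0 → S = S' := by
  intro S
  induction S with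
  | nil =>
    intro S' h; rw [dlev_nil_left] at h
    exact (List.length_eq_zero_iff.mp h).symm
  | cons x xs ih =>
    intro S' h
    cases S' with
    | nil => rw [dlev_nil_right] at h; simp at h
    | cons y ys =>
      rw [dlev, levenshtein_cons_cons] at h
      by_cases hxy : x = y
      · simp only [hxy, Levenshtein.defaultCost_delete, Levenshtein.defaultCost_insert,
          Levenshtein.defaultCost_substitute, if_pos rfl] at h
        have : dlev xs ys = 0 := by simp only [dlev]; omega
        rw [hxy, ih ys this]
      · simp only [Levenshtein.defaultCost_delete, Levenshtein.defaultCost_insert,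
          Levenshtein.defaultCost_substitute, if_neg hxy] at h
        omega

lemma dlev_one_cases {Γ : Type*} [DecidableEq Γ] :
    ∀ S S' : List Γ, dlev S S' = 1 →
      (∃ l r a, S = l ++ r ∧ S' = l ++ a :: r) ∨
      (∃ l x r, S = l ++ x :: r ∧ S' = l ++ r) ∨
      (∃ l x r b, S = l ++ x :: r ∧ S' = l ++ b :: r) := by
  intro S
  induction S with
  | nil =>
    intro S' h
    rw [dlev_nil_left] at h
    obtain ⟨a, ha⟩ := List.length_eq_one_iff.mp h
    exact Or.inl ⟨[], [], a, by simp [ha]⟩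
  | cons x xs ih =>
    intro S' h
    cases S' with
    | nil =>
      rw [dlev_nil_right] at h
      simp only [List.length_cons] at h
      have : xs = [] := List.length_eq_zero_iff.mp (by omega)
      exact Or.inr (Or.inl ⟨[], x, [], by simp [this]⟩)
    | cons y ys =>
      rw [dlev, levenshtein_cons_cons] at h
      by_cases hxy : x = y
      · simp only [Levenshtein.defaultCost_delete, Levenshtein.defaultCost_insert,
          Levenshtein.defaultCost_substitute, if_pos hxy] at h
        have hcases : levenshtein Levenshtein.defaultCost xs (y :: ys) = 0 ∨
            levenshtein Levenshtein.defaultCost (x :: xs) ys = 0 ∨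
            levenshtein Levenshtein.defaultCost xs ys = 1 := by omega
        rcases hcases with h0 | h0 | h0
        · -- deletion of x at front
          have := dlev_zero xs (y :: ys) h0
          exact Or.inr (Or.inl ⟨[], x, y :: ys, by simp [this]⟩)
        · -- insertion of y at front
          have := dlev_zero (x :: xs) ys h0
          exact Or.inl ⟨[], x :: xs, y, by simp [this]⟩
        · rcases ih ys h0 with ⟨l, r, a, h1, h2⟩ | ⟨l, z, r, h1, h2⟩ | ⟨l, z, r, b, h1, h2⟩
          · exact Or.inl ⟨x :: l, r, a, by simp [h1, h2, hxy]⟩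
          · exact Or.inr (Or.inl ⟨x :: l, z, r, by simp [h1, h2, hxy]⟩)
          · exact Or.inr (Or.inr ⟨x :: l, z, r, b, by simp [h1, h2, hxy]⟩)
      · simp only [Levenshtein.defaultCost_delete, Levenshtein.defaultCost_insert,
          Levenshtein.defaultCost_substitute, if_neg hxy] at h
        have hcases : levenshtein Levenshtein.defaultCost xs (y :: ys) = 0 ∨
            levenshtein Levenshtein.defaultCost (x :: xs) ys = 0 ∨
            levenshtein Levenshtein.defaultCost xs ys = 0 := by omega
        rcases hcases with h0 | h0 | h0
        · have := dlev_zero xs (y :: ys) h0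
          exact Or.inr (Or.inl ⟨[], x, y :: ys, by simp [this]⟩)
        · have := dlev_zero (x :: xs) ys h0
          exact Or.inl ⟨[], x :: xs, y, by simp [this]⟩
        · have := dlev_zero xs ys h0
          exact Or.inr (Or.inr ⟨[], x, ys, y, by simp [this]⟩)

lemma phi_cons {Γ : Type*} (x : Γ) (t : List Γ) :
    phi (x :: t) = none :: some x :: phi t := by
  simp [phi]

lemma psi_phi {Γ : Type*} (S : List Γ) : psi (phi S) = S := by
  induction S with
  | nil => simp [phi, psi]
  | cons x t ih => rw [phi_cons]; simpa [psi] using (by simpa [phi, psi] using ih)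

lemma set_ins {Γ : Type*} (l r : List Γ) (a : Γ) :
    psi ((phi (l ++ r)).set (2 * l.length) (some a)) = l ++ a :: r := by
  induction l with
  | nil =>
    cases r with
    | nil => simp [phi, psi]
    | cons y t =>
      rw [List.nil_append, phi_cons]
      simp only [List.set_cons_zero, psi, List.filterMap_cons, id]
      simpa [psi] using psi_phi t
  | cons x t ih =>
    rw [List.cons_append, phi_cons]
    have : 2 * (x :: t).length = 2 * t.length + 1 + 1 := by simp; omega
    rw [this]
    simp only [List.set_cons_succ, psi, List.filterMap_cons]
    simpa [psi] using ih

lemma set_at {Γ : Type*} (l r : List Γ) (x : Γ) (c : Option Γ) :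
    psi ((phi (l ++ x :: r)).set (2 * l.length + 1) c) = l ++ psi [c] ++ r := by
  induction l with
  | nil =>
    rw [List.nil_append, phi_cons]
    cases c <;> simp only [List.set_cons_succ, List.set_cons_zero, psi, List.filterMap_cons, id] <;> simpa [psi] using psi_phi r
  | cons z t ih =>
    rw [List.cons_append, phi_cons]
    have : 2 * (z :: t).length + 1 = (2 * t.length + 1) + 1 + 1 := by simp; omega
    rw [this]
    simp only [List.set_cons_succ, psi, List.filterMap_cons]
    cases c <;> simpa [psi] using ih

/-- Characterization of Levenshtein-distance-1 operations. -/
theorem char_dlev_one {Γ : Type*} [DecidableEq Γ] (S S' : List Γ)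
    (hS : S ≠ []) (h : dlev S S' = 1) :
    ∃ i < 2 * S.length + 1, ∃ c : Option Γ, S' = psi ((phi S).set i c) := by
  rcases dlev_one_cases S S' h with ⟨l, r, a, h1, h2⟩ | ⟨l, x, r, h1, h2⟩ |
      ⟨l, x, r, b, h1, h2⟩
  · refine ⟨2 * l.length, by simp [h1]; try omega, some a, ?_⟩
    rw [h1, set_ins, h2]
  · refine ⟨2 * l.length + 1, by simp [h1]; try omega, none, ?_⟩
    rw [h1, set_at, h2]; simp [psi]
  · refine ⟨2 * l.length + 1, by simp [h1]; try omega, some b, ?_⟩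
    rw [h1, set_at, h2]; simp [psi]
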